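/- For all r, α > 0, the quantity λ₋ := (2(r+α)²/r)(1 - √(α/(r+α))) satisfies r + α < λ₋. -/
import Mathlib

theorem lamMinus_gt (r α : ℝ) (hr : 0 < r) (hα : 0 < α) :
    r + α < (2 * (r + α) ^ 2 / r) * (1 - Real.sqrt (α / (r + α))) := by
  have hs : 0 < r + α := by linarith
  set t := Real.sqrt (α / (r + α)) with ht
  have ht0 : 0 ≤ t := Real.sqrt_nonneg _
  have ht2 : t ^ 2 = α / (r + α) := Real.sq_sqrt (by positivity)
  have hst : (r + α) * t ^ 2 = α := by
    rw [ht2]; field_simp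
  have ht1 : t < 1 := by
    rw [ht]
    have : α / (r + α) < 1 := (div_lt_one hs).mpr (by linarith)
    nlinarith [Real.sq_sqrt (show (0:ℝ) ≤ α / (r + α) by positivity),
      Real.sqrt_nonneg (α / (r + α))]
  rw [div_mul_eq_mul_div, lt_div_iff₀ hr]
  nlinarith [mul_pos hs (mul_pos (sub_pos.mpr ht1) (sub_pos.mpr ht1))]
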